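/- If the base-17 representation of n contains at least two digits belonging to the set {5, 11}, then the Motzkin number M_n is divisible by 17. -/

import Mathlib

open Finset Polynomial


def motzkin (n : ℕ) : ℕ := ∑ k ∈ Finset.range (n + 1), n.choose (2 * k) * catalan k

/-- Central trinomial coefficients (with a slightly extended summation range). -/
def ctri (n : ℕ) : ℕ := ∑ k ∈ Finset.range (n + 2), n.choose (2 * k) * Nat.centralBinom k

def ctriB (n : ℕ) : ℕ := ∑ k ∈ Finset.range (n + 2), n.choose (2 * k + 1) * Nat.centralBinom (k + 1)

def ctriV (n : ℕ) : ℕ := ∑ k ∈ Finset.range (n + 2), n.choose (2 * k) * Nat.centralBinom (k + 1)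

lemma ctri_shift (n : ℕ) :
    ctri n = (∑ k ∈ Finset.range (n + 2), n.choose (2 * k + 2) * Nat.centralBinom (k + 1)) + 1 := by
  have h1 : ctri n = (∑ k ∈ Finset.range (n + 1), n.choose (2 * (k + 1)) * Nat.centralBinom (k + 1))
      + n.choose (2 * 0) * Nat.centralBinom 0 := by
    rw [ctri, Finset.sum_range_succ' (fun k => n.choose (2 * k) * Nat.centralBinom k) (n + 1)]
  have h2 : (∑ k ∈ Finset.range (n + 2), n.choose (2 * k + 2) * Nat.centralBinom (k + 1))
      = (∑ k ∈ Finset.range (n + 1), n.choose (2 * k + 2) * Nat.centralBinom (k + 1))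
        + n.choose (2 * (n + 1) + 2) * Nat.centralBinom (n + 2) := by
    rw [Finset.sum_range_succ]
  have h3 : n.choose (2 * (n + 1) + 2) = 0 := Nat.choose_eq_zero_of_lt (by omega)
  simp only [h3, zero_mul, add_zero] at h2
  rw [h1, h2]
  simp [Nat.centralBinom_zero, mul_add, mul_comm, mul_left_comm, Nat.mul_succ]
  ring_nf

lemma ctri_step (n : ℕ) : ctri (n + 1) = ctri n + ctriB n := by
  have h1 : ctri (n + 1)
      = (∑ k ∈ Finset.range (n + 2), (n + 1).choose (2 * (k + 1)) * Nat.centralBinom (k + 1))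
        + (n + 1).choose (2 * 0) * Nat.centralBinom 0 := by
    rw [ctri, Finset.sum_range_succ' (fun k => (n + 1).choose (2 * k) * Nat.centralBinom k) (n + 2)]
  have h2 : ∀ k : ℕ, (n + 1).choose (2 * (k + 1)) = n.choose (2 * k + 1) + n.choose (2 * k + 2) := by
    intro k
    have : 2 * (k + 1) = (2 * k + 1) + 1 := by ring
    rw [this, Nat.choose_succ_succ']
  rw [h1]
  simp only [h2, add_mul]
  rw [Finset.sum_add_distrib]
  rw [ctri_shift n, ctriB]
  simp [Nat.centralBinom_zero]
  ring

lemma ctriB_step (n : ℕ) : ctriB (n + 1) = ctriB n + ctriV n := by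
  have h1 : ctriB (n + 1)
      = (∑ k ∈ Finset.range (n + 2), (n + 1).choose (2 * k + 1) * Nat.centralBinom (k + 1))
        + (n + 1).choose (2 * (n + 2) + 1) * Nat.centralBinom (n + 3) := by
    rw [ctriB, Finset.sum_range_succ]
  have h3 : (n + 1).choose (2 * (n + 2) + 1) = 0 := Nat.choose_eq_zero_of_lt (by omega)
  have h2 : ∀ k : ℕ, (n + 1).choose (2 * k + 1) = n.choose (2 * k) + n.choose (2 * k + 1) :=
    fun k => Nat.choose_succ_succ n (2 * k)
  rw [h1, h3]
  simp only [h2, add_mul, zero_mul, add_zero]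
  rw [Finset.sum_add_distrib, ctriB, ctriV]
  ring

lemma cb_term (k : ℕ) : Nat.centralBinom (k + 1) + 2 * catalan k = 4 * Nat.centralBinom k := by
  apply Nat.eq_of_mul_eq_mul_left (show 0 < k + 1 by omega)
  have h1 := Nat.succ_mul_centralBinom_succ k
  have h2 := succ_mul_catalan_eq_centralBinom k
  ring_nf
  ring_nf at h1 h2
  nlinarith [h1, h2]

lemma ctriV_motzkin (n : ℕ) : ctriV n + 2 * motzkin n = 4 * ctri n := by
  have hm : motzkin n = ∑ k ∈ Finset.range (n + 2), n.choose (2 * k) * catalan k := by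
    rw [motzkin, Finset.sum_range_succ (fun k => n.choose (2 * k) * catalan k) (n + 1),
      Nat.choose_eq_zero_of_lt (by omega), zero_mul, add_zero]
  rw [hm, ctriV, ctri, Finset.mul_sum, Finset.mul_sum, ← Finset.sum_add_distrib]
  apply Finset.sum_congr rfl
  intro k _
  have h : n.choose (2 * k) * Nat.centralBinom (k + 1) + 2 * (n.choose (2 * k) * catalan k)
      = n.choose (2 * k) * (Nat.centralBinom (k + 1) + 2 * catalan k) := by ring
  rw [h, cb_term]
  ring

lemma key_identity (n : ℕ) :
    2 * ctri (n + 1) + 3 * ctri n = ctri (n + 2) + 2 * motzkin n := by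
  have h1 := ctri_step n
  have h2 : ctri (n + 2) = ctri (n + 1) + ctriB (n + 1) := ctri_step (n + 1)
  have h3 := ctriB_step n
  have h4 := ctriV_motzkin n
  omega



lemma choose_trinomial (n k : ℕ) :
    n.choose (2 * k) * (2 * k).choose k = n.choose k * (n - k).choose k := by
  rcases le_or_gt (2 * k) n with h | h
  · have := Nat.choose_mul (n := n) (k := 2 * k) (s := k) (by omega)
    rw [this]
    congr 2
    omega
  · rcases le_or_gt k n with h2 | h2
    · rw [Nat.choose_eq_zero_of_lt h, Nat.choose_eq_zero_of_lt (show n - k < k by omega),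
        zero_mul, mul_zero]
    · rw [Nat.choose_eq_zero_of_lt (by omega), Nat.choose_eq_zero_of_lt h2, zero_mul, zero_mul]

lemma ctri_eq_sum' (n : ℕ) :
    ctri n = ∑ k ∈ Finset.range (n + 1), n.choose k * (n - k).choose k := by
  have hz : n.choose (2 * (n + 1)) * Nat.centralBinom (n + 1) = 0 := by
    rw [Nat.choose_eq_zero_of_lt (by omega), zero_mul]
  rw [ctri, Finset.sum_range_succ, hz, add_zero]
  apply Finset.sum_congr rfl
  intro k _
  rw [← choose_trinomial]
  rfl

lemma coeff_trinomial_pow (n : ℕ) :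
    (((1 + X + X ^ 2 : Polynomial ℕ)) ^ n).coeff n = ctri n := by
  have h : (1 + X + X ^ 2 : Polynomial ℕ) = (X + X ^ 2) + 1 := by ring
  rw [h, add_pow]
  rw [finset_sum_coeff]
  have hterm : ∀ k ∈ Finset.range (n + 1),
      ((X + X ^ 2 : Polynomial ℕ) ^ k * 1 ^ (n - k) * ((n.choose k : ℕ) : Polynomial ℕ)).coeff n
        = k.choose (n - k) * n.choose k := by
    intro k hk
    have hk' : k ≤ n := Nat.lt_succ_iff.mp (Finset.mem_range.mp hk)
    have hx : (X + X ^ 2 : Polynomial ℕ) ^ k = X ^ k * (1 + X) ^ k := by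
      rw [← mul_pow]; ring_nf
    rw [one_pow, mul_one, ← Polynomial.C_eq_natCast, coeff_mul_C, hx]
    have hcoeff : (X ^ k * (1 + X) ^ k : Polynomial ℕ).coeff n = ((1 + X : Polynomial ℕ) ^ k).coeff (n - k) := by
      conv_lhs => rw [show n = n - k + k from by omega]
      exact Polynomial.coeff_X_pow_mul _ _ _
    rw [hcoeff, coeff_one_add_X_pow]
    norm_num
  rw [Finset.sum_congr rfl hterm]
  rw [ctri_eq_sum']
  rw [← Finset.sum_range_reflect (fun k => k.choose (n - k) * n.choose k) (n + 1)]
  apply Finset.sum_congr rfl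
  intro j hj
  have hj' : j ≤ n := Nat.lt_succ_iff.mp (Finset.mem_range.mp hj)
  have h1 : n + 1 - 1 - j = n - j := by omega
  have h2 : n - (n - j) = j := by omega
  rw [h1, h2, Nat.choose_symm hj']
  ring




instance fact17 : Fact (Nat.Prime 17) := ⟨by norm_num⟩

noncomputable def qZ : Polynomial (ZMod 17) := 1 + X + X ^ 2

lemma qZ_natDegree : qZ.natDegree = 2 := by
  unfold qZ
  compute_degree!

lemma ctri_cast (n : ℕ) : ((ctri n : ZMod 17)) = (qZ ^ n).coeff n := by
  have hmap : (qZ : Polynomial (ZMod 17))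
      = Polynomial.map (Nat.castRingHom (ZMod 17)) (1 + X + X ^ 2 : Polynomial ℕ) := by
    simp [qZ]
  rw [← coeff_trinomial_pow, hmap, ← Polynomial.map_pow, Polynomial.coeff_map]
  rfl

lemma qZ_pow_17 (f : Polynomial (ZMod 17)) : f ^ 17 = Polynomial.expand (ZMod 17) 17 f := by
  have h := Polynomial.map_frobenius_expand (R := ZMod 17) (p := 17) f
  rw [ZMod.frobenius_zmod, Polynomial.map_id] at h
  exact h.symm

lemma lucas_step (q r : ℕ) (hr : r < 17) :
    (qZ ^ (17 * q + r)).coeff (17 * q + r) = (qZ ^ q).coeff q * (qZ ^ r).coeff r := by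
  have hsplit : qZ ^ (17 * q + r) = Polynomial.expand (ZMod 17) 17 (qZ ^ q) * qZ ^ r := by
    rw [pow_add, pow_mul', qZ_pow_17]
  rw [hsplit, Polynomial.coeff_mul]
  rw [Finset.sum_eq_single (17 * q, r)]
  · rw [Polynomial.coeff_expand_mul' (by norm_num)]
  · rintro ⟨i, j⟩ hmem hne
    have hij : i + j = 17 * q + r := Finset.HasAntidiagonal.mem_antidiagonal.mp hmem
    by_cases hdvd : (17 : ℕ) ∣ i
    · rcases le_or_gt j (2 * r) with hj | hj
      · exfalso
        obtain ⟨m, hm⟩ := hdvd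
        apply hne
        have hmq : m = q ∧ j = r := by omega
        simp [hm, hmq.1, hmq.2]
      · have hdeg : ((qZ : Polynomial (ZMod 17)) ^ r).natDegree < j := by
          rw [Polynomial.natDegree_pow, qZ_natDegree]; omega
        rw [Polynomial.coeff_eq_zero_of_natDegree_lt hdeg, mul_zero]
    · rw [Polynomial.coeff_expand (by norm_num : (0:ℕ) < 17), if_neg hdvd, zero_mul]
  · intro habs
    exact absurd ((Finset.HasAntidiagonal.mem_antidiagonal (n := 17 * q + r)).mpr rfl) habs







lemma ctri_lucas (q r : ℕ) (hr : r < 17) :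
    ((ctri (17 * q + r) : ZMod 17)) = (ctri q : ZMod 17) * (ctri r : ZMod 17) := by
  rw [ctri_cast, ctri_cast, ctri_cast, lucas_step q r hr]

def spec (d : ℕ) : Prop := d = 5 ∨ d = 11

instance : DecidablePred spec := fun d => by unfold spec; infer_instance

lemma ctri_spec_zero {d : ℕ} (hd : spec d) : ((ctri d : ZMod 17)) = 0 := by
  rcases hd with h | h <;> subst h
  · have : ctri 5 = 51 := by decide
    rw [this]; decide
  · have : ctri 11 = 25653 := by decide
    rw [this]; decide

lemma ctri_digit_zero : ∀ n : ℕ, (∃ d ∈ Nat.digits 17 n, spec d) → ((ctri n : ZMod 17)) = 0 := by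
  intro n
  induction n using Nat.strong_induction_on with
  | _ n ih =>
    intro ⟨d, hd, hspec⟩
    rcases Nat.eq_zero_or_pos n with h0 | h0
    · subst h0; simp [Nat.digits] at hd
    · rw [Nat.digits_def' (by norm_num : 1 < 17) h0] at hd
      have hn : n = 17 * (n / 17) + n % 17 := by omega
      have := ctri_lucas (n / 17) (n % 17) (Nat.mod_lt _ (by norm_num))
      rw [← hn] at this
      rcases List.mem_cons.mp hd with h | h
      · rw [this, ← h, ctri_spec_zero hspec, mul_comm, zero_mul]
      · have hdiv : (ctri (n / 17) : ZMod 17) = 0 :=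
          ih (n / 17) (Nat.div_lt_self h0 (by norm_num)) ⟨d, h, hspec⟩
        rw [this, hdiv, zero_mul]

lemma countP_ge_one_exists {l : List ℕ} (h : 1 ≤ l.countP (fun d => decide (spec d))) :
    ∃ d ∈ l, spec d := by
  have := List.countP_pos_iff (p := fun d => decide (spec d)) (l := l) |>.mp (by omega)
  obtain ⟨d, hd, hdec⟩ := this
  exact ⟨d, hd, of_decide_eq_true hdec⟩

lemma carry_lemma : ∀ n : ℕ, ∀ c : ℕ, c ≤ 2 →
    2 ≤ (Nat.digits 17 n).countP (fun d => decide (spec d)) →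
    ∃ d ∈ Nat.digits 17 (n + c), spec d := by
  intro n
  induction n using Nat.strong_induction_on with
  | _ n ih =>
    intro c hc h2
    rcases Nat.eq_zero_or_pos n with h0 | h0
    · subst h0; simp [Nat.digits] at h2
    · rw [Nat.digits_def' (by norm_num : 1 < 17) h0] at h2
      rw [List.countP_cons] at h2
      rcases Nat.lt_or_ge (n % 17 + c) 17 with hlt | hge
      · -- no carry
      -- digits (n+c) = (n%17+c) :: digits (n/17)
        have hpos : 0 < n + c := by omega
        have hd : Nat.digits 17 (n + c) = (n % 17 + c) :: Nat.digits 17 (n / 17) := by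
          rw [Nat.digits_def' (by norm_num : 1 < 17) hpos]
          congr 1
          · omega
          · congr 1
            omega
        rw [hd]
        have htail : 1 ≤ (Nat.digits 17 (n / 17)).countP (fun d => decide (spec d)) := by
          have hif : (if decide (spec (n % 17)) = true then 1 else 0) ≤ 1 := by
            split <;> omega
          omega
        obtain ⟨d, hdmem, hdspec⟩ := countP_ge_one_exists htail
        exact ⟨d, List.mem_cons_of_mem _ hdmem, hdspec⟩
      · -- carry: n % 17 ≥ 15 so head is not special
        have hhead : ¬ spec (n % 17) := by
          simp only [spec]; omega
        have hcount : (if decide (spec (n % 17)) = true then 1 else 0) = 0 := by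
          simp [hhead]
        have htail2 : 2 ≤ (Nat.digits 17 (n / 17)).countP (fun d => decide (spec d)) := by omega
        have hpos : 0 < n + c := by omega
        have hmod : (n + c) % 17 = n % 17 + c - 17 := by omega
        have hdiv : (n + c) / 17 = n / 17 + 1 := by omega
        have hd : Nat.digits 17 (n + c) = (n % 17 + c - 17) :: Nat.digits 17 (n / 17 + 1) := by
          rw [Nat.digits_def' (by norm_num : 1 < 17) hpos, hmod, hdiv]
        rw [hd]
        obtain ⟨d, hdmem, hdspec⟩ :=
          ih (n / 17) (Nat.div_lt_self h0 (by norm_num)) 1 (by norm_num) htail2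
        exact ⟨d, List.mem_cons_of_mem _ hdmem, hdspec⟩

theorem motzkin_two_special_base17 (n : ℕ)
    (h : 2 ≤ (Nat.digits 17 n).countP (fun d => decide (d = 5 ∨ d = 11))) :
    17 ∣ motzkin n := by
  have h' : 2 ≤ (Nat.digits 17 n).countP (fun d => decide (spec d)) := h
  have t0 : ((ctri n : ZMod 17)) = 0 :=
    ctri_digit_zero n (by simpa using carry_lemma n 0 (by norm_num) h')
  have t1 : ((ctri (n + 1) : ZMod 17)) = 0 :=
    ctri_digit_zero (n + 1) (carry_lemma n 1 (by norm_num) h')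
  have t2 : ((ctri (n + 2) : ZMod 17)) = 0 :=
    ctri_digit_zero (n + 2) (carry_lemma n 2 (by norm_num) h')
  have hkey := key_identity n
  have hcast : ((2 * ctri (n + 1) + 3 * ctri n : ℕ) : ZMod 17)
      = ((ctri (n + 2) + 2 * motzkin n : ℕ) : ZMod 17) := by rw [hkey]
  push_cast at hcast
  rw [t0, t1, t2] at hcast
  have hm : (2 : ZMod 17) * (motzkin n : ZMod 17) = 0 := by linear_combination -hcast
  have : (motzkin n : ZMod 17) = 0 := by
    rcases mul_eq_zero.mp hm with h2 | h2
    · exact absurd h2 (by decide)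
    · exact h2
  exact (ZMod.natCast_eq_zero_iff _ _).mp this
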